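/- With h and ρ_NG as above, define P_l(y) = T_l(h(y)). Then ∫_{−∞}^{∞} P_i(y) P_j(y) ρ_NG(y) dy = δ_{ij}(1+δ_{i0})/2 for all nonnegative integers i, j. -/

import Mathlib

open Polynomial Polynomial.Chebyshev MeasureTheory

open Real Set in
private lemma cos_orth_aux (k : ℤ) :
    ∫ θ in (0:ℝ)..Real.pi, Real.cos (k * θ) = if k = 0 then Real.pi else 0 := by
  rcases eq_or_ne k 0 with hk | hk
  · simp [hk]
  · have hk' : ((k:ℝ)) ≠ 0 := Int.cast_ne_zero.mpr hk
    rw [if_neg hk]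
    rw [intervalIntegral.integral_comp_mul_left (fun x => Real.cos x) hk']
    rw [integral_cos]
    simp [Real.sin_int_mul_pi]

open Real Set in
private lemma cos_cos_integral (i j : ℕ) :
    ∫ θ in (0:ℝ)..Real.pi, Real.cos (i * θ) * Real.cos (j * θ)
      = ((if i = j then Real.pi else 0) + (if ((i:ℤ) + j = 0) then Real.pi else 0)) / 2 := by
  have hpt : ∀ θ : ℝ, Real.cos (i * θ) * Real.cos (j * θ)
      = (Real.cos ((((i:ℤ) - j : ℤ) : ℝ) * θ) + Real.cos ((((i:ℤ) + j : ℤ) : ℝ) * θ)) / 2 := by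
    intro θ
    push_cast
    rw [sub_mul, add_mul, Real.cos_sub, Real.cos_add]
    ring
  have hci : ∀ c : ℝ, IntervalIntegrable (fun x : ℝ => Real.cos (c * x)) volume 0 Real.pi :=
    fun c => (by continuity : Continuous fun x : ℝ => Real.cos (c * x)).intervalIntegrable _ _
  simp only [hpt]
  rw [intervalIntegral.integral_div]
  rw [intervalIntegral.integral_add (hci _) (hci _)]
  rw [cos_orth_aux, cos_orth_aux]
  simp only [sub_eq_zero, Nat.cast_inj]

/-- the functions `P_l = T_l ∘ h` are orthonormal (in the Chebyshev
normalization) with respect to the non-Gaussian density `ρ_NG` on the real line. -/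
theorem nonGaussian_orthogonality
    (α : ℝ) (hα : 0 < α) (h ρNG : ℝ → ℝ)
    (hh : ∀ y : ℝ, h y = Real.sign y / Real.sqrt (1 + |y| ^ (2 * α)))
    (hρ : ∀ y : ℝ, ρNG y = α * |y| ^ (α - 1) / (Real.pi * (1 + |y| ^ (2 * α))))
    (P : ℕ → ℝ → ℝ) (hP : ∀ l y, P l y = (T ℝ l).eval (h y))
    (i j : ℕ) :
    ∫ y : ℝ, P i y * P j y * ρNG y
      = (if i = j then (1 : ℝ) else 0) * (1 + if i = 0 then (1 : ℝ) else 0) / 2 := by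
  classical
  have hπ : (0:ℝ) < Real.pi := Real.pi_pos
  set F : ℝ → ℝ := fun y => P i y * P j y * ρNG y with hFdef
  set G : ℝ → ℝ := fun θ => Real.cos (i * θ) * Real.cos (j * θ) / Real.pi with hGdef
  set s : Set ℝ := Set.Ioo 0 (Real.pi / 2) with hsdef
  set f : ℝ → ℝ := fun θ => Real.tan θ ^ (1/α) with hfdef
  set f' : ℝ → ℝ := fun θ => 1/α * Real.tan θ ^ (1/α - 1) * (1 / Real.cos θ ^ 2) with hf'def
  have hs : MeasurableSet s := measurableSet_Ioo
  have hmem : ∀ θ ∈ s, θ ∈ Set.Ioo (-(Real.pi/2)) (Real.pi/2) := by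
    intro θ hθ
    exact ⟨lt_trans (neg_lt_zero.mpr (by positivity)) hθ.1, hθ.2⟩
  have hcos : ∀ θ ∈ s, 0 < Real.cos θ := fun θ hθ => Real.cos_pos_of_mem_Ioo (hmem θ hθ)
  have htan : ∀ θ ∈ s, 0 < Real.tan θ := fun θ hθ =>
    Real.tan_pos_of_pos_of_lt_pi_div_two hθ.1 hθ.2
  -- derivative
  have hderiv : ∀ θ ∈ s, HasDerivWithinAt f (f' θ) s θ := by
    intro θ hθ
    have h1 : HasDerivAt (fun x : ℝ => x ^ (1/α)) (1/α * Real.tan θ ^ (1/α - 1)) (Real.tan θ) :=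
      Real.hasDerivAt_rpow_const (Or.inl (htan θ hθ).ne')
    have h2 := Real.hasDerivAt_tan (hcos θ hθ).ne'
    have h3 := h1.comp θ h2
    have h4 : HasDerivAt f (f' θ) θ := by
      simp only [hfdef, hf'def]
      simpa [Function.comp_def, mul_assoc] using h3
    exact h4.hasDerivWithinAt
  -- injectivity
  have hinj : Set.InjOn f s := by
    have hmono : StrictMonoOn f s := by
      intro x hx y hy hxy
      have ht := Real.strictMonoOn_tan (hmem x hx) (hmem y hy) hxy
      exact Real.rpow_lt_rpow (htan x hx).le ht (by positivity)
    exact hmono.injOn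
  -- image
  have himg : f '' s = Set.Ioi (0:ℝ) := by
    apply Set.Subset.antisymm
    · rintro _ ⟨θ, hθ, rfl⟩
      exact Real.rpow_pos_of_pos (htan θ hθ) _
    · intro y hy
      have hy' : (0:ℝ) < y := hy
      have hya : (0:ℝ) < y ^ α := Real.rpow_pos_of_pos hy' α
      refine ⟨Real.arctan (y ^ α), ⟨?_, Real.arctan_lt_pi_div_two _⟩, ?_⟩
      · calc (0:ℝ) = Real.arctan 0 := by simp
          _ < Real.arctan (y ^ α) := Real.arctan_strictMono hya
      · show Real.tan (Real.arctan (y ^ α)) ^ (1/α) = y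
        rw [Real.tan_arctan, ← Real.rpow_mul hy'.le, mul_one_div_cancel hα.ne', Real.rpow_one]
  -- key pointwise computations
  have hcore : ∀ θ ∈ s, h (f θ) = Real.cos θ ∧ h (-f θ) = Real.cos (Real.pi - θ) ∧
      f' θ * ρNG (f θ) = 1 / Real.pi ∧ f' θ * ρNG (-f θ) = 1 / Real.pi ∧ 0 ≤ f' θ := by
    intro θ hθ
    have ht := htan θ hθ
    have hc := hcos θ hθ
    have hyp : 0 < f θ := Real.rpow_pos_of_pos ht _
    have habs : |f θ| = f θ := abs_of_pos hyp
    have habs' : |(-f θ)| = f θ := by rw [abs_neg, habs]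
    have h2a : f θ ^ (2*α) = Real.tan θ ^ (2:ℕ) := by
      show (Real.tan θ ^ (1/α)) ^ (2*α) = _
      rw [← Real.rpow_natCast (Real.tan θ) 2, ← Real.rpow_mul ht.le]
      congr 1
      field_simp
      norm_num
    have htansq : 1 + Real.tan θ ^ (2:ℕ) = 1 / Real.cos θ ^ 2 := by
      rw [Real.tan_eq_sin_div_cos]
      field_simp
      try (rw [add_comm]; exact Real.sin_sq_add_cos_sq θ)
      try linarith [Real.sin_sq_add_cos_sq θ]
    have hsqrt : Real.sqrt (1 + f θ ^ (2*α)) = 1 / Real.cos θ := by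
      rw [h2a, htansq, one_div, one_div, ← inv_pow, Real.sqrt_sq (by positivity)]
    have hρval : ρNG (f θ) = α * f θ ^ (α - 1) / (Real.pi * (1 / Real.cos θ ^ 2)) := by
      rw [hρ, habs, h2a, htansq]
    have hρval' : ρNG (-f θ) = α * f θ ^ (α - 1) / (Real.pi * (1 / Real.cos θ ^ 2)) := by
      rw [hρ, habs', h2a, htansq]
    have hfa1 : f θ ^ (α - 1) = Real.tan θ ^ (1 - 1/α) := by
      show (Real.tan θ ^ (1/α)) ^ (α - 1) = _
      rw [← Real.rpow_mul ht.le]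
      congr 1
      field_simp
      try ring
    have hprod : f' θ * ρNG (f θ) = 1 / Real.pi := by
      have hexp : Real.tan θ ^ (1/α - 1) * Real.tan θ ^ (1 - 1/α) = 1 := by
        rw [← Real.rpow_add ht]
        norm_num
      have e1 : (1:ℝ)/α * α = 1 := by field_simp
      have e2 : (1 / Real.cos θ ^ 2) / (1 / Real.cos θ ^ 2) = 1 := div_self (by positivity)
      simp only [hρval, hfa1, hf'def]
      calc 1/α * Real.tan θ ^ (1/α - 1) * (1 / Real.cos θ ^ 2)
            * (α * Real.tan θ ^ (1 - 1/α) / (Real.pi * (1 / Real.cos θ ^ 2)))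
          = (Real.tan θ ^ (1/α - 1) * Real.tan θ ^ (1 - 1/α)) * ((1/α * α)
            * ((1 / Real.cos θ ^ 2) / (1 / Real.cos θ ^ 2))) / Real.pi := by
            ring
        _ = 1 / Real.pi := by rw [hexp, e1, e2]; ring
    refine ⟨?_, ?_, hprod, ?_, ?_⟩
    · rw [hh, habs, hsqrt, Real.sign_of_pos hyp]
      field_simp
    · rw [hh, habs', hsqrt, Real.sign_of_neg (neg_neg_iff_pos.mpr hyp), Real.cos_pi_sub]
      field_simp
    · rw [hρval']
      rw [hρval] at hprod
      exact hprod
    · have : 0 < f' θ := by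
        rw [hf'def]
        have := Real.rpow_pos_of_pos ht (1/α - 1)
        positivity
      exact this.le
  -- the two key integrand identities
  have hkey : ∀ θ ∈ s, |f' θ| • F (f θ) = G θ := by
    intro θ hθ
    obtain ⟨hc1, _, hc3, _, hc5⟩ := hcore θ hθ
    have hTi : P i (f θ) = Real.cos (i * θ) := by
      rw [hP, hc1]
      have := Polynomial.Chebyshev.T_real_cos θ (i : ℤ)
      rw [this]
      push_cast
      ring_nf
    have hTj : P j (f θ) = Real.cos (j * θ) := by
      rw [hP, hc1]
      have := Polynomial.Chebyshev.T_real_cos θ (j : ℤ)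
      rw [this]
      push_cast
      ring_nf
    rw [smul_eq_mul, abs_of_nonneg hc5, hFdef]
    show f' θ * (P i (f θ) * P j (f θ) * ρNG (f θ)) = G θ
    rw [hTi, hTj, hGdef]
    calc f' θ * (Real.cos (i*θ) * Real.cos (j*θ) * ρNG (f θ))
        = Real.cos (i*θ) * Real.cos (j*θ) * (f' θ * ρNG (f θ)) := by ring
      _ = Real.cos (i*θ) * Real.cos (j*θ) * (1 / Real.pi) := by rw [hc3]
      _ = Real.cos (i*θ) * Real.cos (j*θ) / Real.pi := by ring
  have hkey' : ∀ θ ∈ s, |f' θ| • F (-f θ) = G (Real.pi - θ) := by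
    intro θ hθ
    obtain ⟨_, hc2, _, hc4, hc5⟩ := hcore θ hθ
    have hTi : P i (-f θ) = Real.cos (i * (Real.pi - θ)) := by
      rw [hP, hc2]
      have := Polynomial.Chebyshev.T_real_cos (Real.pi - θ) (i : ℤ)
      rw [this]
      push_cast
      ring_nf
    have hTj : P j (-f θ) = Real.cos (j * (Real.pi - θ)) := by
      rw [hP, hc2]
      have := Polynomial.Chebyshev.T_real_cos (Real.pi - θ) (j : ℤ)
      rw [this]
      push_cast
      ring_nf
    rw [smul_eq_mul, abs_of_nonneg hc5, hFdef]
    show f' θ * (P i (-f θ) * P j (-f θ) * ρNG (-f θ)) = G (Real.pi - θ)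
    rw [hTi, hTj, hGdef]
    calc f' θ * (Real.cos (i*(Real.pi-θ)) * Real.cos (j*(Real.pi-θ)) * ρNG (-f θ))
        = Real.cos (i*(Real.pi-θ)) * Real.cos (j*(Real.pi-θ)) * (f' θ * ρNG (-f θ)) := by ring
      _ = Real.cos (i*(Real.pi-θ)) * Real.cos (j*(Real.pi-θ)) * (1 / Real.pi) := by rw [hc4]
      _ = Real.cos (i*(Real.pi-θ)) * Real.cos (j*(Real.pi-θ)) / Real.pi := by ring
  -- continuity of G and of G (π - ·)
  have hGcont : Continuous G := by
    rw [hGdef]; fun_prop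
  have hGint : IntegrableOn G s := by
    exact (hGcont.integrableOn_Icc).mono_set Set.Ioo_subset_Icc_self
  have hGint' : IntegrableOn (fun θ => G (Real.pi - θ)) s := by
    exact ((hGcont.comp (continuous_const.sub continuous_id)).integrableOn_Icc).mono_set
      Set.Ioo_subset_Icc_self
  -- integrability of F on Ioi 0 and of F ∘ neg on Ioi 0
  have hintpos : IntegrableOn F (Set.Ioi 0) := by
    rw [← himg, integrableOn_image_iff_integrableOn_abs_deriv_smul hs hderiv hinj]
    exact hGint.congr_fun (fun x hx => (hkey x hx).symm) hs
  have hintnegcomp : IntegrableOn (fun y => F (-y)) (Set.Ioi 0) := by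
    rw [← himg, integrableOn_image_iff_integrableOn_abs_deriv_smul hs hderiv hinj]
    exact hGint'.congr_fun (fun x hx => (hkey' x hx).symm) hs
  -- integrability of F on Iio 0
  have hA : MeasurableEmbedding (fun x : ℝ => -x) :=
    (Homeomorph.neg ℝ).isClosedEmbedding.measurableEmbedding
  have hmap : Measure.map (fun x : ℝ => -x) (volume.restrict (Set.Ioi (0:ℝ)))
      = volume.restrict (Set.Iio (0:ℝ)) := by
    have hpre : (fun x : ℝ => -x) ⁻¹' (Set.Iio (0:ℝ)) = Set.Ioi 0 := by
      ext x; simp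
    rw [← hpre, ← Measure.restrict_map hA.measurable measurableSet_Iio,
      Measure.map_neg_eq_self (volume : Measure ℝ)]
  have hintneg : IntegrableOn F (Set.Iio 0) := by
    rw [IntegrableOn, ← hmap, hA.integrable_map_iff]
    exact hintnegcomp
  -- set integrals over Ioo as interval integrals
  have hIoo : ∀ g : ℝ → ℝ, ∫ θ in s, g θ = ∫ θ in (0:ℝ)..(Real.pi/2), g θ := by
    intro g
    rw [intervalIntegral.integral_of_le (by positivity), ← integral_Ioc_eq_integral_Ioo]
  -- change of variables, positive side
  have hpos : ∫ y in Set.Ioi (0:ℝ), F y = ∫ θ in (0:ℝ)..(Real.pi/2), G θ := by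
    rw [← himg, integral_image_eq_integral_abs_deriv_smul hs hderiv hinj, ← hIoo]
    exact setIntegral_congr_fun hs hkey
  -- change of variables, negative side
  have hneg : ∫ y in Set.Iio (0:ℝ), F y = ∫ θ in (Real.pi/2)..Real.pi, G θ := by
    have h1 : ∫ y in Set.Iio (0:ℝ), F y = ∫ y in Set.Ioi (0:ℝ), F (-y) := by
      rw [integral_comp_neg_Ioi 0 F, neg_zero, integral_Iic_eq_integral_Iio]
    have h2 : ∫ y in Set.Ioi (0:ℝ), F (-y) = ∫ θ in (0:ℝ)..(Real.pi/2), G (Real.pi - θ) := by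
      rw [← himg, integral_image_eq_integral_abs_deriv_smul hs hderiv hinj (fun y => F (-y)),
        ← hIoo]
      exact setIntegral_congr_fun hs hkey'
    rw [h1, h2, intervalIntegral.integral_comp_sub_left G Real.pi]
    rw [show Real.pi - Real.pi / 2 = Real.pi / 2 by ring, sub_zero]
  -- combine
  have hcomb : ∫ y : ℝ, F y = ∫ θ in (0:ℝ)..Real.pi, G θ := by
    have hIci : IntegrableOn F (Set.Ici 0) := by
      rw [integrableOn_Ici_iff_integrableOn_Ioi]
      exact hintpos
    rw [← intervalIntegral.integral_Iio_add_Ici hintneg hIci, integral_Ici_eq_integral_Ioi, hpos, hneg]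
    rw [add_comm]
    exact intervalIntegral.integral_add_adjacent_intervals
      (hGcont.intervalIntegrable _ _) (hGcont.intervalIntegrable _ _)
  rw [hcomb]
  -- final computation
  have hGsplit : ∫ θ in (0:ℝ)..Real.pi, G θ
      = (∫ θ in (0:ℝ)..Real.pi, Real.cos (i * θ) * Real.cos (j * θ)) / Real.pi := by
    rw [hGdef, intervalIntegral.integral_div]
  rw [hGsplit, cos_cos_integral i j]
  have hij0 : ((i:ℤ) + j = 0) ↔ (i = 0 ∧ j = 0) := by omega
  by_cases hij : i = j
  · subst hij
    by_cases hi0 : i = 0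
    · subst hi0
      norm_num
    · have hne : ¬ ((i:ℤ) + i = 0) := by omega
      simp only [if_pos rfl, if_neg hne, if_neg hi0, eq_self_iff_true, if_true, add_zero]
      rw [div_div, mul_comm (2:ℝ) Real.pi, ← div_div, div_self hπ.ne']
      norm_num
  · have h1 : ¬ ((i:ℤ) + j = 0) := by
      rw [hij0]; rintro ⟨ha, hb⟩; exact hij (ha.trans hb.symm)
    rw [if_neg hij, if_neg h1, if_neg hij]
    simp
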